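/- arXiv:1411.3221 — 2 statements merged into one kernel-verified Lean document; each statement's English description precedes it below -/
import Mathlib

section
/- Let F : 𝒜 ⥤ ℬ be an exact functor between abelian categories (an additive functor preserving finite limits and finite colimits). Suppose that for every object A of 𝒜 the induced map on subobject lattices is injective, i.e., for all subobjects P, Q of A, equality of the subobject of F.obj A represented by F.map (P.arrow) with the subobject represented by F.map (Q.arrow) implies P = Q. Then F is faithful. -/
open CategoryTheory CategoryTheory.Limits

/-- If the map induced on subobject lattices by an exact functor between abelian
categories is injective for every object, then the functor is faithful. -/
theorem exact_functor_faithful_of_subobject_map_injective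
    {𝒜 ℬ : Type*} [Category 𝒜] [Category ℬ] [Abelian 𝒜] [Abelian ℬ]
    (F : 𝒜 ⥤ ℬ) [F.Additive] [PreservesFiniteLimits F] [PreservesFiniteColimits F]
    (h : ∀ (A : 𝒜) (P Q : Subobject A),
      Subobject.mk (F.map P.arrow) = Subobject.mk (F.map Q.arrow) → P = Q) :
    F.Faithful := by
  refine ⟨fun {X Y} {f g} hfg => ?_⟩
  have hsub : F.map (f - g) = 0 := by rw [Functor.map_sub, hfg, sub_self]
  set φ := f - g with hφdef
  suffices hz : φ = 0 by rwa [sub_eq_zero] at hz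
  -- kernel of F.map φ is everything
  have h1 : kernelSubobject (F.map φ) = ⊤ := by simp [hsub]
  have h2 : IsIso (kernel.ι (F.map φ)) := by
    rw [Subobject.isIso_iff_mk_eq_top]; exact h1
  have h3 : IsIso (F.map (kernel.ι φ)) := by
    rw [← kernelComparison_comp_ι φ F]
    infer_instance
  -- hence F.map of the arrow of kernelSubobject φ is iso
  have h4 : IsIso (F.map (kernelSubobject φ).arrow) := by
    rw [← kernelSubobject_arrow, Functor.map_comp]
    infer_instance
  have h5 : IsIso (F.map ((⊤ : Subobject X).arrow)) := inferInstance
  have h6 : kernelSubobject φ = ⊤ := by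
    apply h X
    rw [Subobject.mk_eq_top_of_isIso (F.map (kernelSubobject φ).arrow),
      Subobject.mk_eq_top_of_isIso (F.map ((⊤ : Subobject X).arrow))]
  have h7 : IsIso (kernel.ι φ) := by
    rw [Subobject.isIso_iff_mk_eq_top]; exact h6
  have h8 : kernel.ι φ ≫ φ = 0 := kernel.condition φ
  rw [← cancel_epi (kernel.ι φ), h8, comp_zero]
end

section
/- Let k be a field and R a finite-dimensional k-algebra, and let M and C be finitely generated R-modules (each carrying the induced k-vector space structure, on which R acts k-linearly). Then there exist n : ℕ and an R-linear map Δ : M →ₗ[R] (Fin n → C) such that every morphism from M to any module in add(C) factors initially through Δ; concretely: for every R-module N which is a direct summand of a finite power of C (i.e., for which there exist m : ℕ and R-linear maps ι : N →ₗ[R] (Fin m → C) and π : (Fin m → C) →ₗ[R] N with π ∘ ι = id), every R-linear map g : M →ₗ[R] N satisfies g = h ∘ Δ for some R-linear map h : (Fin n → C) →ₗ[R] N. That is, Δ is an add(C)-preenvelope of M. -/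
/-- Over a finite-dimensional algebra `R`, every finitely generated module `M` has an
`add(C)`-preenvelope `Δ : M →ₗ[R] (Fin n → C)` for any finitely generated module `C`:
every map from `M` to a direct summand of a finite power of `C` factors through `Δ`. -/
theorem exists_addC_preenvelope
    (k : Type*) [Field k] (R : Type*) [Ring R] [Algebra k R] [Module.Finite k R]
    (M : Type*) [AddCommGroup M] [Module R M] [Module k M] [IsScalarTower k R M]
    [Module.Finite R M]
    (C : Type*) [AddCommGroup C] [Module R C] [Module k C] [IsScalarTower k R C]
    [Module.Finite R C] :
    ∃ (n : ℕ) (Δ : M →ₗ[R] (Fin n → C)),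
      ∀ (N : Type*) [AddCommGroup N] [Module R N],
        (∃ (m : ℕ) (ι : N →ₗ[R] (Fin m → C)) (π : (Fin m → C) →ₗ[R] N),
          π.comp ι = LinearMap.id) →
        ∀ g : M →ₗ[R] N, ∃ h : (Fin n → C) →ₗ[R] N, h.comp Δ = g := by
  have hcomm : SMulCommClass R k C := by
    constructor
    intro r a c
    rw [← algebraMap_smul R a c, ← algebraMap_smul R a (r • c), ← mul_smul, ← mul_smul,
      Algebra.commutes]
  have hMfin : Module.Finite k M := Module.Finite.trans R M
  have hCfin : Module.Finite k C := Module.Finite.trans R C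
  have : FiniteDimensional k (M →ₗ[R] C) := by
    have : FiniteDimensional k (M →ₗ[k] C) := inferInstance
    let res : (M →ₗ[R] C) →ₗ[k] (M →ₗ[k] C) :=
      { toFun := fun f =>
          { toFun := f
            map_add' := f.map_add
            map_smul' := fun a x => by
              simp only [RingHom.id_apply]
              rw [← algebraMap_smul R a x, f.map_smul, algebraMap_smul] }
        map_add' := fun f g => rfl
        map_smul' := fun a f => rfl }
    exact FiniteDimensional.of_injective res (fun f g h => by
      ext x; exact congrArg (fun φ => φ.toFun x) h)
  set n := Module.finrank k (M →ₗ[R] C) with hn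
  let b : Module.Basis (Fin n) k (M →ₗ[R] C) := Module.finBasis k (M →ₗ[R] C)
  refine ⟨n, LinearMap.pi (fun i => b i), ?_⟩
  rintro N _ _ ⟨m, ι, π, hπι⟩ g
  set a : Fin m → Fin n → k := fun j i =>
    b.repr ((LinearMap.proj j).comp (ι.comp g)) i with ha
  let h' : (Fin n → C) →ₗ[R] (Fin m → C) :=
    LinearMap.pi (fun j => ∑ i, a j i • LinearMap.proj i)
  refine ⟨π.comp h', ?_⟩
  have key : h'.comp (LinearMap.pi (fun i => b i)) = ι.comp g := by
    ext x j
    have := b.sum_repr ((LinearMap.proj (R := R) (φ := fun _ : Fin m => C) j).comp (ι.comp g))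
    calc (h' (LinearMap.pi (fun i => b i) x)) j
        = ∑ i, a j i • (b i) x := by
          simp [h', LinearMap.pi_apply, LinearMap.sum_apply, LinearMap.smul_apply]
      _ = (∑ i, a j i • b i) x := by
          simp [LinearMap.sum_apply, LinearMap.smul_apply]
      _ = ((LinearMap.proj j).comp (ι.comp g)) x := by rw [this]
      _ = (ι.comp g) x j := rfl
  calc (π.comp h').comp (LinearMap.pi (fun i => b i))
      = π.comp (h'.comp (LinearMap.pi (fun i => b i))) := by
        rw [LinearMap.comp_assoc]
    _ = (π.comp ι).comp g := by rw [key, LinearMap.comp_assoc]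
    _ = g := by rw [hπι, LinearMap.id_comp]
end
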